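/- Let G be a finite simple graph with n vertices. There exists a bijective labeling of the vertices of G by [n] = {1,...,n} together with nonnegative integers a_1,...,a_n such that, in ℤ[t], ∑_{m≥0} tf_m(G) · t^{n−m} = ∏_{i=1}^{n} (t + a_i) (where tf_m(G) is computed with respect to that labeling), if and only if G is a forest (acyclic). -/

import Mathlib

open Polynomial Classical

/-- A list of elements of a linear order is *tight* if it contains no three-term
subsequence order-isomorphic to 231, 312 or 321. -/
def TightList {α : Type*} [LinearOrder α] (l : List α) : Prop :=
  ∀ a b c : α, [a, b, c].Sublist l →
    ¬(c < a ∧ a < b) ∧ ¬(b < c ∧ c < a) ∧ ¬(c < b ∧ b < a)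

/-- A simple graph on a linearly ordered vertex type is a *tight forest*. -/
def IsTightForest {V : Type*} [LinearOrder V] (F : SimpleGraph V) : Prop :=
  F.IsAcyclic ∧ ∀ (r v : V), (∀ w, F.Reachable r w → r ≤ w) →
    ∀ p : F.Walk r v, p.IsPath → TightList p.support

/-- `F` is a tight spanning forest of `G`. -/
def IsTSF {n : ℕ} (G : SimpleGraph (Fin n)) (F : Finset (Sym2 (Fin n))) : Prop :=
  (F : Set (Sym2 (Fin n))) ⊆ G.edgeSet ∧
    IsTightForest (SimpleGraph.fromEdgeSet (F : Set (Sym2 (Fin n))))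

/-- The number of tight spanning forests of `G` with `m` edges. -/
noncomputable def tf {n : ℕ} (G : SimpleGraph (Fin n)) (m : ℕ) : ℕ :=
  ((Finset.univ : Finset (Finset (Sym2 (Fin n)))).filter
    (fun F => IsTSF G F ∧ F.card = m)).card

namespace TFAux

open SimpleGraph


open SimpleGraph

variable {W : Type*}

lemma concat_isPath {G : SimpleGraph W} {u v w : W} {p : G.Walk u v} (hp : p.IsPath)
    (h : G.Adj v w) (hw : w ∉ p.support) : (p.concat h).IsPath := by
  rw [SimpleGraph.Walk.isPath_def, SimpleGraph.Walk.support_concat]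
  simp [List.concat_eq_append, List.nodup_append, hp.support_nodup, hw]
  intro a ha hae
  exact hw (hae ▸ ha)

lemma shortest_not_mem {G : SimpleGraph W} {r u w : W} {p : G.Walk r u}
    (hlen : p.length = G.dist r u) (hd : G.dist r u < G.dist r w) : w ∉ p.support := by
  intro hw
  have h1 := SimpleGraph.dist_le (p.takeUntil w hw)
  have h2 := SimpleGraph.Walk.length_takeUntil_le p hw
  omega

lemma unique_lower {G : SimpleGraph W} (hG : G.IsAcyclic) {r u v w : W}
    (hru : G.Reachable r u) (hrv : G.Reachable r v)
    (h1 : G.Adj u w) (h2 : G.Adj v w)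
    (hdu : G.dist r u < G.dist r w) (hdv : G.dist r v < G.dist r w) : u = v := by
  obtain ⟨pu, hpu, hlu⟩ := hru.exists_path_of_dist
  obtain ⟨pv, hpv, hlv⟩ := hrv.exists_path_of_dist
  have hwu : w ∉ pu.support := shortest_not_mem hlu hdu
  have hwv : w ∉ pv.support := shortest_not_mem hlv hdv
  have hqu : (pu.concat h1).IsPath := concat_isPath hpu h1 hwu
  have hqv : (pv.concat h2).IsPath := concat_isPath hpv h2 hwv
  have hPeq := hG.path_unique ⟨pu.concat h1, hqu⟩ ⟨pv.concat h2, hqv⟩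
  have hwalk : pu.concat h1 = pv.concat h2 := congrArg Subtype.val hPeq
  have hsup : pu.support.concat w = pv.support.concat w := by
    rw [List.concat_eq_append, List.concat_eq_append, ← SimpleGraph.Walk.support_concat,
      ← SimpleGraph.Walk.support_concat, hwalk]
    exact h1
  have hs : pu.support = pv.support := by
    have := congrArg List.dropLast hsup
    simpa [List.dropLast_concat] using this
  have hrev : pu.reverse.support = pv.reverse.support := by
    rw [SimpleGraph.Walk.support_reverse, SimpleGraph.Walk.support_reverse, hs]
  rw [SimpleGraph.Walk.support_eq_cons pu.reverse,
    SimpleGraph.Walk.support_eq_cons pv.reverse] at hrev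
  have := congrArg List.head? hrev
  simpa using this

lemma adj_dist_ne {G : SimpleGraph W} (hG : G.IsAcyclic) {r u v : W}
    (hru : G.Reachable r u) (hrv : G.Reachable r v) (h : G.Adj u v) :
    G.dist r u ≠ G.dist r v := by
  intro heq
  obtain ⟨pu, hpu, hlu⟩ := hru.exists_path_of_dist
  obtain ⟨pv, hpv, hlv⟩ := hrv.exists_path_of_dist
  have hvu : v ∉ pu.support := by
    intro hw
    have hsplit := congrArg SimpleGraph.Walk.length (pu.take_spec hw)
    rw [SimpleGraph.Walk.length_append] at hsplit
    have hd1 := SimpleGraph.dist_le (pu.takeUntil v hw)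
    have hd2 : (pu.dropUntil v hw).length ≠ 0 := by
      intro h0
      exact h.ne' (SimpleGraph.Walk.eq_of_length_eq_zero (p := pu.dropUntil v hw) h0)
    omega
  have hq : (pu.concat h).IsPath := concat_isPath hpu h hvu
  have hPeq := hG.path_unique ⟨pu.concat h, hq⟩ ⟨pv, hpv⟩
  have hwalk : pu.concat h = pv := congrArg Subtype.val hPeq
  have hlen := congrArg SimpleGraph.Walk.length hwalk
  rw [SimpleGraph.Walk.length_concat] at hlen
  omega

lemma isAcyclic_of_le {G H : SimpleGraph W} (hle : H ≤ G) (hG : G.IsAcyclic) : H.IsAcyclic :=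
  fun _ c hc => hG (c.mapLe hle) (hc.mapLe hle)

/-- hom from `G` to `G.map e.toEmbedding`. -/
def fwdHom {α β : Type*} (G : SimpleGraph α) (e : α ≃ β) : G →g G.map e.toEmbedding where
  toFun := e
  map_rel' := fun h => SimpleGraph.map_adj _ _ _ _ |>.mpr ⟨_, _, h, rfl, rfl⟩

/-- hom from `G.map e.toEmbedding` back to `G`. -/
def backHom {α β : Type*} (G : SimpleGraph α) (e : α ≃ β) : G.map e.toEmbedding →g G where
  toFun := e.symm
  map_rel' := by
    intro a b hab
    rw [SimpleGraph.map_adj] at hab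
    obtain ⟨x, y, hxy, rfl, rfl⟩ := hab
    simpa using hxy

lemma isAcyclic_map {α β : Type*} {G : SimpleGraph α} (e : α ≃ β) (hG : G.IsAcyclic) :
    (G.map e.toEmbedding).IsAcyclic :=
  fun _ c hc => hG (c.map (backHom G e)) (hc.map (fun _ _ h => e.symm.injective h))

lemma walk_chain {G' H : SimpleGraph W} (hle : H ≤ G') (d : W → ℕ)
    (hA : ∀ ⦃u v⦄, G'.Adj u v → d u ≠ d v)
    (hU : ∀ ⦃u v w⦄, G'.Adj u w → G'.Adj v w → d u < d w → d v < d w → u = v) :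
    ∀ {x v : W} (p : H.Walk x v), p.IsPath →
      (∀ y, H.Adj x y → y ∈ p.support → d x < d y) →
      List.Chain' (fun a b => d a < d b) p.support := by
  intro x v p
  induction p with
  | nil => intro _ _; exact List.isChain_singleton _
  | @cons x y v h q ih =>
    intro hp hfirst
    have hy_mem : y ∈ (SimpleGraph.Walk.cons h q).support := by
      rw [SimpleGraph.Walk.support_cons]
      exact List.mem_cons_of_mem _ q.start_mem_support
    have hxy : d x < d y := hfirst y h hy_mem
    rw [SimpleGraph.Walk.support_cons]; unfold List.Chain'; rw [List.isChain_cons]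
    constructor
    · intro b hb
      have hq : q.support.head? = some y := by
        rw [SimpleGraph.Walk.support_eq_cons q]; rfl
      rw [hq, Option.mem_some_iff] at hb
      rw [← hb]
      exact hxy
    · apply ih ((SimpleGraph.Walk.cons_isPath_iff h q).mp hp).1
      intro z hz hzq
      have hne : d y ≠ d z := hA (hle hz)
      rcases Nat.lt_or_ge (d y) (d z) with hlt | hge
      · exact hlt
      · exfalso
        have hzy : d z < d y := lt_of_le_of_ne hge (Ne.symm hne)
        have hx_z : x = z := hU (hle h) (hle hz.symm) hxy hzy
        have hxq : x ∉ q.support := ((SimpleGraph.Walk.cons_isPath_iff h q).mp hp).2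
        exact hxq (hx_z ▸ hzq)

lemma tightList_of_sorted {α : Type*} [LinearOrder α] {l : List α} (h : l.Pairwise (· < ·)) :
    TightList l := by
  intro a b c hsub
  have hp : List.Pairwise (· < ·) [a, b, c] := List.Pairwise.sublist hsub h
  rw [List.pairwise_cons, List.pairwise_cons] at hp
  obtain ⟨h1, h2, _⟩ := hp
  have hab := h1 b (by simp)
  have hac := h1 c (by simp)
  have hbc := h2 c (by simp)
  exact ⟨fun h' => lt_asymm hac h'.1, fun h' => lt_asymm hac h'.2, fun h' => lt_asymm hab h'.2⟩



open SimpleGraph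

variable {n : ℕ}

lemma isTSF_of_card_le_two {G' : SimpleGraph (Fin n)} {F : Finset (Sym2 (Fin n))}
    (hsub : (F : Set (Sym2 (Fin n))) ⊆ G'.edgeSet) (hc : F.card ≤ 2) : IsTSF G' F := by
  have hedge : ∀ {a b : Fin n}
      (p : (SimpleGraph.fromEdgeSet (F : Set (Sym2 (Fin n)))).Walk a b),
      p.edges.Nodup → p.length ≤ 2 := by
    intro a b p hp
    have h1 : p.edges.toFinset ⊆ F := by
      intro e he
      rw [List.mem_toFinset] at he
      have h2 := p.edges_subset_edgeSet he
      rw [SimpleGraph.edgeSet_fromEdgeSet] at h2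
      exact h2.1
    have h2 : p.edges.toFinset.card = p.length := by
      rw [List.toFinset_card_of_nodup hp, SimpleGraph.Walk.length_edges]
    have h3 := Finset.card_le_card h1
    omega
  refine ⟨hsub, ?_, ?_⟩
  · intro v c hcyc
    have h1 := hedge c hcyc.isCircuit.isTrail.edges_nodup
    have h2 := hcyc.three_le_length
    omega
  · intro r v hr p hp
    intro a b c habc
    have hlen3 : p.support.length ≤ 3 := by
      have h1 := hedge p hp.isTrail.edges_nodup
      have h2 := p.length_support
      omega
    have hlen : ([a, b, c] : List (Fin n)).length ≤ p.support.length := habc.length_le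
    simp only [List.length_cons, List.length_nil] at hlen
    have heq : [a, b, c] = p.support := habc.eq_of_length (by
      simp only [List.length_cons, List.length_nil]; omega)
    have hsup := p.support_eq_cons
    have ha : a = r := by
      rw [hsup] at heq
      exact (List.cons_eq_cons.mp heq).1
    have hnd : ([a, b, c] : List (Fin n)).Nodup := heq ▸ hp.support_nodup
    have hb_mem : b ∈ p.support := by rw [← heq]; simp
    have hc_mem : c ∈ p.support := by rw [← heq]; simp
    have hrb : r < b := by
      have h1 : r ≤ b := hr b ⟨p.takeUntil b hb_mem⟩
      have h2 : a ≠ b := by simp at hnd; tauto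
      exact lt_of_le_of_ne h1 (ha ▸ h2)
    have hrc : r < c := by
      have h1 : r ≤ c := hr c ⟨p.takeUntil c hc_mem⟩
      have h2 : a ≠ c := by simp at hnd; tauto
      exact lt_of_le_of_ne h1 (ha ▸ h2)
    rw [ha]
    exact ⟨fun h' => absurd h'.1 (not_lt.mpr hrc.le), fun h' => absurd h'.2 (not_lt.mpr hrc.le),
      fun h' => absurd h'.2 (not_lt.mpr hrb.le)⟩

lemma isTSF_of_all {G' : SimpleGraph (Fin n)} (hG' : G'.IsAcyclic) (d : Fin n → ℕ)
    (hA : ∀ ⦃u v⦄, G'.Adj u v → d u ≠ d v)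
    (hU : ∀ ⦃u v w⦄, G'.Adj u w → G'.Adj v w → d u < d w → d v < d w → u = v)
    (hM : ∀ ⦃u v⦄, d u < d v → u < v)
    {F : Finset (Sym2 (Fin n))} (hsub : (F : Set (Sym2 (Fin n))) ⊆ G'.edgeSet) :
    IsTSF G' F := by
  have hle : SimpleGraph.fromEdgeSet (F : Set (Sym2 (Fin n))) ≤ G' := by
    have h := SimpleGraph.fromEdgeSet_mono hsub
    rwa [SimpleGraph.fromEdgeSet_edgeSet] at h
  refine ⟨hsub, isAcyclic_of_le hle hG', ?_⟩
  intro r v hr p hp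
  have hchain := walk_chain hle d hA hU p hp ?_
  · have hsorted : p.support.Pairwise (· < ·) := by
      rw [← List.isChain_iff_pairwise]
      exact List.IsChain.imp (fun a b h => hM h) hchain
    exact tightList_of_sorted hsorted
  · intro y hy _
    have h1 : d r ≠ d y := hA (hle hy)
    rcases Nat.lt_or_ge (d r) (d y) with h | h
    · exact h
    · exfalso
      have h2 : d y < d r := lt_of_le_of_ne h (Ne.symm h1)
      exact (hr y hy.reachable).not_gt (hM h2)

lemma edge_card_le {G' : SimpleGraph (Fin n)} [Fintype G'.edgeSet] (d : Fin n → ℕ)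
    (hA : ∀ ⦃u v⦄, G'.Adj u v → d u ≠ d v)
    (hU : ∀ ⦃u v w⦄, G'.Adj u w → G'.Adj v w → d u < d w → d v < d w → u = v)
    (hM : ∀ ⦃u v⦄, d u < d v → u < v) :
    G'.edgeFinset.card ≤ n := by
  classical
  set f : Sym2 (Fin n) → Fin n := Sym2.lift ⟨fun a b => a ⊔ b, fun a b => sup_comm a b⟩ with hf
  have hrep : ∀ e ∈ G'.edgeFinset, ∃ u w : Fin n, e = s(u, w) ∧ G'.Adj u w ∧ d u < d w ∧
      f e = w := by
    intro e he
    induction e using Sym2.ind with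
    | _ a b =>
      have hadj : G'.Adj a b := by rwa [SimpleGraph.mem_edgeFinset, SimpleGraph.mem_edgeSet] at he
      rcases Nat.lt_or_ge (d a) (d b) with h | h
      · exact ⟨a, b, rfl, hadj, h, by
          simp only [hf, Sym2.lift_mk]
          exact sup_eq_right.mpr (hM h).le⟩
      · have h' : d b < d a := lt_of_le_of_ne h (Ne.symm (hA hadj))
        exact ⟨b, a, Sym2.eq_swap, hadj.symm, h', by
          simp only [hf, Sym2.lift_mk]
          exact sup_eq_left.mpr (hM h').le⟩
  have hinj : Set.InjOn f G'.edgeFinset := by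
    intro e1 he1 e2 he2 hfe
    obtain ⟨u1, w1, he1', hadj1, hd1, hf1⟩ := hrep e1 he1
    obtain ⟨u2, w2, he2', hadj2, hd2, hf2⟩ := hrep e2 he2
    have hw : w1 = w2 := by rw [← hf1, ← hf2, hfe]
    subst hw
    have := hU hadj1 hadj2 hd1 hd2
    rw [he1', he2', this]
  calc G'.edgeFinset.card ≤ (Finset.univ : Finset (Fin n)).card :=
        Finset.card_le_card_of_injOn f (fun _ _ => Finset.mem_univ _) hinj
    _ = n := by simp

lemma tf_eq_choose_of {G' : SimpleGraph (Fin n)} [Fintype G'.edgeSet] {m : ℕ}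
    (hall : ∀ F : Finset (Sym2 (Fin n)), (F : Set (Sym2 (Fin n))) ⊆ G'.edgeSet →
      F.card = m → IsTSF G' F) :
    tf G' m = (G'.edgeFinset.card).choose m := by
  rw [tf, ← Finset.card_powersetCard]
  congr 1
  ext F
  simp only [Finset.mem_filter, Finset.mem_univ, true_and, Finset.mem_powersetCard]
  constructor
  · rintro ⟨hTSF, hcard⟩
    refine ⟨fun e he => ?_, hcard⟩
    rw [SimpleGraph.mem_edgeFinset]
    exact hTSF.1 (Finset.mem_coe.mpr he)
  · rintro ⟨hsub, hcard⟩
    have hsub' : (F : Set (Sym2 (Fin n))) ⊆ G'.edgeSet := fun e he =>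
      SimpleGraph.mem_edgeFinset.mp (hsub (Finset.mem_coe.mp he))
    exact ⟨hall F hsub' hcard, hcard⟩



lemma sum_powersetCard_one {ι : Type*} (s : Finset ι) (a : ι → ℕ) :
    ∑ t ∈ s.powersetCard 1, ∏ i ∈ t, a i = ∑ i ∈ s, a i := by
  rw [Finset.powersetCard_one, Finset.sum_map]
  simp

lemma sq_sum_eq {ι : Type*} [DecidableEq ι] (s : Finset ι) (a : ι → ℕ) :
    (∑ i ∈ s, a i) * (∑ i ∈ s, a i) =
      2 * (∑ t ∈ s.powersetCard 2, ∏ i ∈ t, a i) + ∑ i ∈ s, a i * a i := by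
  induction s using Finset.cons_induction with
  | empty => simp
  | cons x s hx ih =>
    rw [Finset.sum_cons, Finset.sum_cons]
    have hps : (Finset.cons x s hx).powersetCard 2
        = s.powersetCard 2 ∪ (s.powersetCard 1).image (insert x) := by
      rw [Finset.cons_eq_insert, Finset.powersetCard_succ_insert hx]
    have hdisj : Disjoint (s.powersetCard 2) ((s.powersetCard 1).image (insert x)) := by
      rw [Finset.disjoint_left]
      intro t ht hmem
      obtain ⟨u, _, heqt⟩ := Finset.mem_image.mp hmem
      have hts : t ⊆ s := (Finset.mem_powersetCard.mp ht).1
      exact hx (hts (heqt ▸ Finset.mem_insert_self x u))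
    have hinj : ∀ u1 ∈ s.powersetCard 1, ∀ u2 ∈ s.powersetCard 1,
        insert x u1 = insert x u2 → u1 = u2 := by
      intro u1 h1 u2 h2 hins
      have hx1 : x ∉ u1 := fun hm => hx ((Finset.mem_powersetCard.mp h1).1 hm)
      have hx2 : x ∉ u2 := fun hm => hx ((Finset.mem_powersetCard.mp h2).1 hm)
      have := congrArg (fun t => Finset.erase t x) hins
      simpa [Finset.erase_insert hx1, Finset.erase_insert hx2] using this
    rw [hps, Finset.sum_union hdisj, Finset.sum_image hinj]
    have himg : ∑ t ∈ s.powersetCard 1, ∏ i ∈ insert x t, a i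
        = a x * ∑ i ∈ s, a i := by
      rw [← sum_powersetCard_one s a, Finset.mul_sum]
      apply Finset.sum_congr rfl
      intro t ht
      have hxt : x ∉ t := fun hm => hx ((Finset.mem_powersetCard.mp ht).1 hm)
      rw [Finset.prod_insert hxt]
    rw [himg]
    zify
    zify at ih
    linear_combination ih

lemma two_mul_choose_two : ∀ E : ℕ, 2 * E.choose 2 = E * (E - 1) := by
  intro E
  induction E with
  | zero => simp
  | succ m ih =>
    rw [Nat.choose_succ_succ, Nat.mul_add, ih, Nat.choose_one_right, Nat.succ_sub_one]
    rcases m with - | k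
    · simp
    · simp only [Nat.succ_sub_one]
      ring

lemma sum_prod_boole {n : ℕ} (a : Fin n → ℕ) (h1 : ∀ i, a i ≤ 1) (m : ℕ) :
    ∑ t ∈ Finset.univ.powersetCard m, ∏ i ∈ t, a i
      = ((Finset.univ.filter (fun i => a i = 1)).card).choose m := by
  classical
  set O := Finset.univ.filter (fun i => a i = 1) with hO
  have hprod : ∀ t : Finset (Fin n), ∏ i ∈ t, a i = if t ⊆ O then 1 else 0 := by
    intro t
    split_ifs with h
    · exact Finset.prod_eq_one (fun i hi => (Finset.mem_filter.mp (h hi)).2)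
    · obtain ⟨i, hit, hio⟩ := Finset.not_subset.mp h
      have hi0 : a i = 0 := by
        have h2 := h1 i
        have h3 : a i ≠ 1 := fun h' => hio (Finset.mem_filter.mpr ⟨Finset.mem_univ _, h'⟩)
        omega
      exact Finset.prod_eq_zero hit hi0
  have : ∑ t ∈ Finset.univ.powersetCard m, ∏ i ∈ t, a i
      = ((Finset.univ.powersetCard m).filter (fun t => t ⊆ O)).card := by
    rw [Finset.card_filter]
    apply Finset.sum_congr rfl
    intro t _
    rw [hprod t]
  rw [this]
  have hfil : (Finset.univ.powersetCard m).filter (fun t => t ⊆ O) = O.powersetCard m := by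
    ext t
    simp only [Finset.mem_filter, Finset.mem_powersetCard, Finset.subset_univ, true_and]
    tauto
  rw [hfil, Finset.card_powersetCard]

lemma filter_card_eq_sum {n : ℕ} (a : Fin n → ℕ) (h1 : ∀ i, a i ≤ 1) :
    (Finset.univ.filter (fun i => a i = 1)).card = ∑ i, a i := by
  classical
  rw [Finset.card_filter]
  apply Finset.sum_congr rfl
  intro i _
  have := h1 i
  split_ifs with h
  · omega
  · omega

lemma coeff_extract {n : ℕ} (c : ℕ → ℕ) (a : Fin n → ℕ)
    (hEq : ∑ m ∈ Finset.range (n + 1), (c m : Polynomial ℤ) * X ^ (n - m)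
        = ∏ i : Fin n, (X + C ((a i : ℤ)))) {m : ℕ} (hm : m ≤ n) :
    c m = ∑ t ∈ Finset.univ.powersetCard m, ∏ i ∈ t, a i := by
  have h := congrArg (fun p => Polynomial.coeff p (n - m)) hEq
  rw [Polynomial.finset_sum_coeff] at h
  have hL : ∀ k ∈ Finset.range (n + 1), ((c k : Polynomial ℤ) * X ^ (n - k)).coeff (n - m)
      = if k = m then (c k : ℤ) else 0 := by
    intro k hk
    rw [Finset.mem_range] at hk
    rw [← Polynomial.C_eq_natCast, Polynomial.coeff_C_mul, Polynomial.coeff_X_pow]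
    by_cases hkm : k = m
    · subst hkm
      simp
    · have : ¬ (n - m = n - k) := by omega
      rw [if_neg this, if_neg hkm, mul_zero]
  rw [Finset.sum_congr rfl hL, Finset.sum_ite_eq' (Finset.range (n + 1)) m
    (fun k => (c k : ℤ)), if_pos (Finset.mem_range.mpr (by omega))] at h
  rw [Finset.prod_X_add_C_coeff Finset.univ (fun i => ((a i : ℤ)))
    (by simp only [Finset.card_univ, Fintype.card_fin]; omega)] at h
  simp only [Finset.card_univ, Fintype.card_fin, Nat.sub_sub_self hm] at h
  exact_mod_cast h



open SimpleGraph


theorem forward {V : Type*} [Fintype V] [DecidableEq V] (n : ℕ)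
    (hcard : Fintype.card V = n) (G : SimpleGraph V)
    (hex : ∃ (ℓ : V ≃ Fin n) (a : Fin n → ℕ),
        ∑ m ∈ Finset.range (n + 1),
            (tf (G.map ℓ.toEmbedding) m : Polynomial ℤ) * X ^ (n - m)
          = ∏ i : Fin n, (X + C ((a i : ℤ)))) : G.IsAcyclic := by
  obtain ⟨ℓ, a, hEq⟩ := hex
  by_contra hcyc
  rw [SimpleGraph.IsAcyclic] at hcyc
  push_neg at hcyc
  obtain ⟨v0, c0, hc0⟩ := hcyc
  set G' := G.map ℓ.toEmbedding with hG'
  haveI : Fintype G'.edgeSet := Set.Finite.fintype (Set.toFinite _)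
  set c : G'.Walk (ℓ v0) (ℓ v0) := c0.map (fwdHom G ℓ) with hc_def
  have hc : c.IsCycle := hc0.map (fun _ _ h => ℓ.injective h)
  set k := c.length with hk
  have hk3 : 3 ≤ k := hc.three_le_length
  have hkn : k ≤ n := by
    have h1 : c.support.tail.Nodup := hc.support_nodup
    have h2 := h1.length_le_card
    have h3 := c.length_support
    have h4 : c.support.tail.length = c.support.length - 1 := by simp
    simp only [Fintype.card_fin] at h2
    omega
  set E := G'.edgeFinset.card with hE
  have hcoef : ∀ m, m ≤ n → tf G' m = ∑ t ∈ Finset.univ.powersetCard m, ∏ i ∈ t, a i :=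
    fun m hm => coeff_extract (tf G') a hEq hm
  have htfsmall : ∀ m, m ≤ 2 → tf G' m = E.choose m := fun m hm =>
    tf_eq_choose_of (fun F hsub hcF => isTSF_of_card_le_two hsub (hcF ▸ hm))
  have h1n : 1 ≤ n := by omega
  have h2n : 2 ≤ n := by omega
  have hS1 : ∑ i, a i = E := by
    have h1 := hcoef 1 h1n
    rw [htfsmall 1 (by norm_num), Nat.choose_one_right, sum_powersetCard_one] at h1
    exact h1.symm
  have hS2 : ∑ t ∈ Finset.univ.powersetCard 2, ∏ i ∈ t, a i = E.choose 2 := by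
    have h1 := hcoef 2 h2n
    rw [htfsmall 2 (by norm_num)] at h1
    exact h1.symm
  have hsumsq : ∑ i, a i * a i = ∑ i, a i := by
    have hsq := sq_sum_eq Finset.univ a
    rw [hS2] at hsq
    rw [show 2 * E.choose 2 = E * (E - 1) from two_mul_choose_two E] at hsq
    rw [hS1] at hsq
    have hEE : E * E = E * (E - 1) + E := by
      rcases E with - | m
      · simp
      · simp only [Nat.succ_sub_one]; ring
    rw [hS1]
    exact Nat.add_left_cancel (hsq.symm.trans hEE)
  have ha1 : ∀ i, a i ≤ 1 := by
    have hle : ∀ i ∈ Finset.univ, a i ≤ a i * a i := by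
      intro i _
      rcases Nat.eq_zero_or_pos (a i) with h | h
      · simp [h]
      · calc a i = a i * 1 := (mul_one _).symm
          _ ≤ a i * a i := Nat.mul_le_mul_left _ h
    have hpt := (Finset.sum_eq_sum_iff_of_le hle).mp hsumsq.symm
    intro i
    have hii := hpt i (Finset.mem_univ i)
    by_contra hgt
    push_neg at hgt
    have h2 : 2 * a i ≤ a i * a i := Nat.mul_le_mul_right _ hgt
    rw [← hii] at h2
    omega
  have hSm : ∀ m, ∑ t ∈ Finset.univ.powersetCard m, ∏ i ∈ t, a i = E.choose m := by
    intro m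
    rw [sum_prod_boole a ha1 m, filter_card_eq_sum a ha1, hS1]
  have htfk : tf G' k = E.choose k := by rw [hcoef k hkn, hSm k]
  have hceq : tf G' k = ((Finset.univ : Finset (Finset (Sym2 (Fin n)))).filter
      (fun F => IsTSF G' F ∧ F.card = k)).card := rfl
  have hAsub : (Finset.univ : Finset (Finset (Sym2 (Fin n)))).filter
      (fun F => IsTSF G' F ∧ F.card = k) ⊆ G'.edgeFinset.powersetCard k := by
    intro F hF
    rw [Finset.mem_filter] at hF
    obtain ⟨-, hTSF, hcardF⟩ := hF
    rw [Finset.mem_powersetCard]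
    exact ⟨fun e he => SimpleGraph.mem_edgeFinset.mpr (hTSF.1 (Finset.mem_coe.mpr he)), hcardF⟩
  have hseteq : (Finset.univ : Finset (Finset (Sym2 (Fin n)))).filter
      (fun F => IsTSF G' F ∧ F.card = k) = G'.edgeFinset.powersetCard k := by
    apply Finset.eq_of_subset_of_card_le hAsub
    rw [Finset.card_powersetCard, ← hE, ← htfk, hceq]
  set F0 := c.edges.toFinset with hF0
  have hF0card : F0.card = k := by
    rw [hF0, List.toFinset_card_of_nodup hc.isCircuit.isTrail.edges_nodup,
      SimpleGraph.Walk.length_edges]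
  have hF0sub : F0 ⊆ G'.edgeFinset := by
    intro e he
    rw [hF0, List.mem_toFinset] at he
    exact SimpleGraph.mem_edgeFinset.mpr (c.edges_subset_edgeSet he)
  have hF0mem : F0 ∈ G'.edgeFinset.powersetCard k :=
    Finset.mem_powersetCard.mpr ⟨hF0sub, hF0card⟩
  rw [← hseteq, Finset.mem_filter] at hF0mem
  have hTSF : IsTSF G' F0 := hF0mem.2.1
  have hsubE : ∀ e ∈ c.edges,
      e ∈ (SimpleGraph.fromEdgeSet (F0 : Set (Sym2 (Fin n)))).edgeSet := by
    intro e he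
    rw [SimpleGraph.edgeSet_fromEdgeSet]
    refine ⟨?_, SimpleGraph.not_isDiag_of_mem_edgeSet G' (c.edges_subset_edgeSet he)⟩
    rw [Finset.mem_coe, hF0, List.mem_toFinset]
    exact he
  exact hTSF.2.1 (c.transfer _ hsubE) (hc.transfer hsubE)



open SimpleGraph

theorem backward {V : Type*} [Fintype V] [DecidableEq V] (n : ℕ)
    (hcard : Fintype.card V = n) (G : SimpleGraph V) (hG : G.IsAcyclic) :
    ∃ (ℓ : V ≃ Fin n) (a : Fin n → ℕ),
        ∑ m ∈ Finset.range (n + 1),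
            (tf (G.map ℓ.toEmbedding) m : Polynomial ℤ) * X ^ (n - m)
          = ∏ i : Fin n, (X + C ((a i : ℤ))) := by
  classical
  set rt : V → V := fun v => (G.connectedComponentMk v).out with hrt
  have hreach : ∀ v, G.Reachable (rt v) v := fun v =>
    SimpleGraph.ConnectedComponent.exact ((G.connectedComponentMk v).out_eq)
  set d : V → ℕ := fun v => G.dist (rt v) v with hd
  have hrt_adj : ∀ {u v : V}, G.Adj u v → rt u = rt v := fun h =>
    congrArg Quot.out (SimpleGraph.ConnectedComponent.connectedComponentMk_eq_of_adj h)
  have hAV : ∀ ⦃u v : V⦄, G.Adj u v → d u ≠ d v := by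
    intro u v h
    have he : rt u = rt v := hrt_adj h
    have hrv : G.Reachable (rt u) v := by rw [he]; exact hreach v
    have h2 := adj_dist_ne hG (hreach u) hrv h
    simp only [hd]
    rw [← he]
    exact h2
  have hUV : ∀ ⦃u v w : V⦄, G.Adj u w → G.Adj v w → d u < d w → d v < d w → u = v := by
    intro u v w h1 h2 hd1 hd2
    have e1 : rt u = rt w := hrt_adj h1
    have e2 : rt v = rt w := hrt_adj h2
    simp only [hd] at hd1 hd2
    rw [e1] at hd1
    rw [e2] at hd2
    have hru : G.Reachable (rt w) u := by rw [← e1]; exact hreach u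
    have hrv : G.Reachable (rt w) v := by rw [← e2]; exact hreach v
    exact unique_lower hG hru hrv h1 h2 hd1 hd2
  set e0 : V ≃ Fin n := (Fintype.equivFin V).trans (finCongr hcard) with he0
  letI : LinearOrder V := LinearOrder.lift' (fun v => toLex (d v, e0 v))
    (fun u v huv => e0.injective (congrArg (fun p => (ofLex p).2) huv))
  have hlt : ∀ {u v : V}, d u < d v → u < v := by
    intro u v h
    show toLex (d u, e0 u) < toLex (d v, e0 v)
    exact Prod.Lex.left _ _ h
  have hucard : (Finset.univ : Finset V).card = n := by rw [Finset.card_univ, hcard]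
  set oi := Finset.orderIsoOfFin (Finset.univ : Finset V) hucard with hoi
  set ℓ : V ≃ Fin n :=
    { toFun := fun v => oi.symm ⟨v, Finset.mem_univ v⟩
      invFun := fun i => (oi i : V)
      left_inv := fun v => by simp
      right_inv := fun i => by simp } with hℓ
  have hℓmono : ∀ {u v : V}, u < v → ℓ u < ℓ v := by
    intro u v h
    show oi.symm ⟨u, Finset.mem_univ u⟩ < oi.symm ⟨v, Finset.mem_univ v⟩
    exact (OrderIso.lt_iff_lt oi.symm).mpr (Subtype.mk_lt_mk.mpr h)
  set G' := G.map ℓ.toEmbedding with hG'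
  have hG'acyc : G'.IsAcyclic := isAcyclic_map ℓ hG
  set d' : Fin n → ℕ := fun i => d (ℓ.symm i) with hd'
  have hadj' : ∀ {x y : Fin n}, G'.Adj x y → G.Adj (ℓ.symm x) (ℓ.symm y) := by
    intro x y hxy
    rw [hG', SimpleGraph.map_adj] at hxy
    obtain ⟨u, v, huv, hu, hv⟩ := hxy
    have h1 : (ℓ.symm x) = u := by rw [← hu]; exact ℓ.symm_apply_apply u
    have h2 : (ℓ.symm y) = v := by rw [← hv]; exact ℓ.symm_apply_apply v
    rw [h1, h2]
    exact huv
  have hA' : ∀ ⦃u v : Fin n⦄, G'.Adj u v → d' u ≠ d' v := fun u v h => hAV (hadj' h)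
  have hU' : ∀ ⦃x y z : Fin n⦄, G'.Adj x z → G'.Adj y z → d' x < d' z → d' y < d' z →
      x = y := by
    intro x y z h1 h2 h3 h4
    have h5 := hUV (hadj' h1) (hadj' h2) h3 h4
    have h6 := congrArg ℓ h5
    simpa using h6
  have hM' : ∀ ⦃u v : Fin n⦄, d' u < d' v → u < v := by
    intro u v h
    have h2 := hℓmono (hlt h)
    simpa using h2
  have hall : ∀ F : Finset (Sym2 (Fin n)), (F : Set (Sym2 (Fin n))) ⊆ G'.edgeSet →
      IsTSF G' F := fun F hF => isTSF_of_all hG'acyc d' hA' hU' hM' hF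
  haveI : Fintype G'.edgeSet := Set.Finite.fintype (Set.toFinite _)
  have hEn : G'.edgeFinset.card ≤ n := edge_card_le d' hA' hU' hM'
  set E := G'.edgeFinset.card with hE
  have htf : ∀ m, tf G' m = E.choose m := fun m =>
    tf_eq_choose_of (fun F hsub _ => hall F hsub)
  obtain ⟨O, hOsub, hOcard⟩ := Finset.exists_subset_card_eq
    (show E ≤ (Finset.univ : Finset (Fin n)).card by simpa using hEn)
  refine ⟨ℓ, fun i => if i ∈ O then 1 else 0, ?_⟩
  have hRHS : ∏ i : Fin n, (X + C (((if i ∈ O then (1 : ℕ) else 0) : ℤ)))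
      = X ^ (n - E) * (X + 1) ^ E := by
    rw [← Finset.prod_sdiff hOsub]
    have h1 : ∏ i ∈ O, (X + C (((if i ∈ O then (1 : ℕ) else 0) : ℤ))) = (X + 1) ^ E := by
      have hpt : ∀ i ∈ O, (X + C (((if i ∈ O then (1 : ℕ) else 0) : ℤ)))
          = X + 1 := by
        intro i hi
        rw [if_pos hi]
        norm_num
      rw [Finset.prod_congr rfl hpt, Finset.prod_const, hOcard]
    have h2 : ∏ i ∈ Finset.univ \ O, (X + C (((if i ∈ O then (1 : ℕ) else 0) : ℤ)))
        = X ^ (n - E) := by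
      have hpt : ∀ i ∈ Finset.univ \ O, (X + C (((if i ∈ O then (1 : ℕ) else 0) : ℤ)))
          = X := by
        intro i hi
        rw [if_neg (Finset.mem_sdiff.mp hi).2]
        norm_num
      rw [Finset.prod_congr rfl hpt, Finset.prod_const, Finset.card_sdiff_of_subset hOsub, hOcard]
      simp
    rw [h1, h2]
  have hstep : ∑ j ∈ Finset.range (E + 1),
      (E.choose (E - j) : Polynomial ℤ) * X ^ (n - (E - j))
      = X ^ (n - E) * (X + 1) ^ E := by
    have hterm : ∀ j ∈ Finset.range (E + 1),
        (E.choose (E - j) : Polynomial ℤ) * X ^ (n - (E - j))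
          = X ^ (n - E) * (X ^ j * (E.choose j : Polynomial ℤ)) := by
      intro j hj
      rw [Finset.mem_range] at hj
      have hj' : j ≤ E := by omega
      rw [Nat.choose_symm hj']
      have hnn : n - (E - j) = (n - E) + j := by omega
      rw [hnn, pow_add]
      ring
    rw [Finset.sum_congr rfl hterm, ← Finset.mul_sum]
    congr 1
    rw [add_pow]
    apply Finset.sum_congr rfl
    intro j hj
    simp
  calc ∑ m ∈ Finset.range (n + 1), (tf G' m : Polynomial ℤ) * X ^ (n - m)
      = ∑ m ∈ Finset.range (n + 1), (E.choose m : Polynomial ℤ) * X ^ (n - m) :=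
        Finset.sum_congr rfl (fun m _ => by rw [htf m])
    _ = ∑ m ∈ Finset.range (E + 1), (E.choose m : Polynomial ℤ) * X ^ (n - m) :=
        (Finset.sum_subset (Finset.range_subset_range.mpr (by omega)) (fun m hm hnm => by
          have h5 : E < m := by
            rw [Finset.mem_range] at hnm
            omega
          rw [Nat.choose_eq_zero_of_lt h5]
          simp)).symm
    _ = X ^ (n - E) * (X + 1) ^ E := by
        rw [← hstep]
        have hrefl := Finset.sum_range_reflect
          (fun m => (E.choose m : Polynomial ℤ) * X ^ (n - m)) (E + 1)
        simp only [Nat.add_sub_cancel] at hrefl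
        exact hrefl.symm
    _ = ∏ i : Fin n, (X + C (Nat.cast (if i ∈ O then 1 else 0))) := by
        rw [← hRHS]
        exact Finset.prod_congr rfl (fun i _ => by simp)


end TFAux

theorem stmt_19 {V : Type*} [Fintype V] [DecidableEq V] (n : ℕ)
    (hcard : Fintype.card V = n) (G : SimpleGraph V) :
    (∃ (ℓ : V ≃ Fin n) (a : Fin n → ℕ),
        ∑ m ∈ Finset.range (n + 1),
            (tf (G.map ℓ.toEmbedding) m : Polynomial ℤ) * X ^ (n - m)
          = ∏ i : Fin n, (X + C ((a i : ℤ)))) ↔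
      G.IsAcyclic :=
  ⟨fun hex => TFAux.forward n hcard G hex, fun hG => TFAux.backward n hcard G hG⟩
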